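/- Let $(L,[\cdot,\cdot])$ be a Leibniz algebra with representation $(V;\rho^l,\rho^r)$. Define $R(x,y)u = \rho^r(y)\rho^r(x)u$, $M(x,y)u = \rho^r(y)\rho^l(x)u$, $L(x,y)u = \rho^l([x,y])u$. Then $(R,M,L)$ is a representation of the Leibniz triple system $(L,\{x,y,z\}=[[x,y],z])$ on $V$. -/
import Mathlib


def IsTrilin (K : Type*) [Field K] {L M : Type*} [AddCommGroup L] [Module K L]
    [AddCommGroup M] [Module K M] (t : L → L → L → M) : Prop :=
  (∀ y z, IsLinearMap K fun x => t x y z) ∧ (∀ x z, IsLinearMap K fun y => t x y z) ∧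
    (∀ x y, IsLinearMap K fun z => t x y z)

def LTSIdent {L : Type*} [AddCommGroup L] (t : L → L → L → L) : Prop :=
  (∀ a b c d e, t a b (t c d e) =
      t (t a b c) d e - t (t a b d) c e - t (t a b e) c d + t (t a b e) d c) ∧
  (∀ a b c d e, t a (t b c d) e =
      t (t a b c) d e - t (t a c b) d e - t (t a d b) c e + t (t a d c) b e)

def IsLTS (K : Type*) [Field K] {L : Type*} [AddCommGroup L] [Module K L]
    (t : L → L → L → L) : Prop := IsTrilin K t ∧ LTSIdent t

def sd {L V : Type*} [AddCommGroup L] [AddCommGroup V]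
    (t : L → L → L → L) (l m r : L → L → V → V) :
    L × V → L × V → L × V → L × V :=
  fun p q s => (t p.1 q.1 s.1, l p.1 q.1 s.2 + m p.1 s.1 q.2 + r q.1 s.1 p.2)

def IsRep (K : Type*) [Field K] {L V : Type*} [AddCommGroup L] [Module K L]
    [AddCommGroup V] [Module K V] (t : L → L → L → L) (l m r : L → L → V → V) : Prop :=
  IsLTS K (sd t l m r)

def IsRRB {K : Type*} [Field K] {L V : Type*} [AddCommGroup L] [Module K L]
    [AddCommGroup V] [Module K V] (t : L → L → L → L) (l m r : L → L → V → V)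
    (T : V →ₗ[K] L) : Prop :=
  ∀ u v w, t (T u) (T v) (T w) =
    T (l (T u) (T v) w + m (T u) (T w) v + r (T v) (T w) u)

def IsRB {K : Type*} [Field K] {L : Type*} [AddCommGroup L] [Module K L]
    (t : L → L → L → L) (R : L →ₗ[K] L) : Prop :=
  ∀ x y z, t (R x) (R y) (R z) =
    R (t (R x) (R y) z + t (R x) y (R z) + t x (R y) (R z))

def IsNij {K : Type*} [Field K] {A : Type*} [AddCommGroup A] [Module K A]
    (t : A → A → A → A) (N : A →ₗ[K] A) : Prop :=
  ∀ x y z, t (N x) (N y) (N z) =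
    N (t (N x) (N y) z) + N (t x (N y) (N z)) + N (t (N x) y (N z))
      - N (N (t (N x) y z)) - N (N (t x (N y) z)) - N (N (t x y (N z)))
      + N (N (N (t x y z)))

def IsLeib {K : Type*} [Field K] {L : Type*} [AddCommGroup L] [Module K L]
    (b : L →ₗ[K] L →ₗ[K] L) : Prop :=
  ∀ x y z, b x (b y z) = b (b x y) z - b (b x z) y

def IsLeibRep {K : Type*} [Field K] {L V : Type*} [AddCommGroup L] [Module K L]
    [AddCommGroup V] [Module K V] (b : L →ₗ[K] L →ₗ[K] L)
    (ρl ρr : L →ₗ[K] Module.End K V) : Prop :=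
  (∀ x y, ρl (b x y) = ρr y * ρl x - ρl x * ρr y) ∧
    (∀ x y, ρl (b x y) = ρl x * ρl y + ρr y * ρl x) ∧
    (∀ x y, ρr (b x y) = ρr y * ρr x - ρr x * ρr y)

theorem stmt15 {K : Type*} [Field K] {L V : Type*} [AddCommGroup L] [Module K L]
    [AddCommGroup V] [Module K V]
    (b : L →ₗ[K] L →ₗ[K] L) (hb : IsLeib b)
    (ρl ρr : L →ₗ[K] Module.End K V) (hrep : IsLeibRep b ρl ρr) :
    IsRep K (fun x y z => b (b x y) z)
      (fun x y w => ρl (b x y) w)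
      (fun x z v => ρr z (ρl x v))
      (fun y z u => ρr z (ρr y u)) := by
  obtain ⟨h1, h2, h3⟩ := hrep
  have H1 : ∀ x y (v : V), ρl (b x y) v = ρr y (ρl x v) - ρl x (ρr y v) := by
    intro x y v; rw [h1]; simp [LinearMap.sub_apply, Module.End.mul_apply]
  have H2 : ∀ x y (v : V), ρl (b x y) v = ρl x (ρl y v) + ρr y (ρl x v) := by
    intro x y v; rw [h2]; simp [LinearMap.add_apply, Module.End.mul_apply]
  have H3 : ∀ x y (v : V), ρr (b x y) v = ρr y (ρr x v) - ρr x (ρr y v) := by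
    intro x y v; rw [h3]; simp [LinearMap.sub_apply, Module.End.mul_apply]
  set B' : L × V → L × V → L × V :=
    fun p q => (b p.1 q.1, ρl p.1 q.2 + ρr q.1 p.2) with hB
  have hsd : sd (fun x y z => b (b x y) z)
      (fun x y w => ρl (b x y) w)
      (fun x z v => ρr z (ρl x v))
      (fun y z u => ρr z (ρr y u)) = fun p q s => B' (B' p q) s := by
    funext p q s
    simp only [sd, hB, map_add]
    exact Prod.ext rfl (by abel)
  have hJ : ∀ x y z, B' x (B' y z) = B' (B' x y) z - B' (B' x z) y := by
    intro x y z
    have hfst : (B' x (B' y z)).1 = (B' (B' x y) z - B' (B' x z) y).1 := by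
      simpa [hB] using hb x.1 y.1 z.1
    have hsnd : (B' x (B' y z)).2 = (B' (B' x y) z - B' (B' x z) y).2 := by
      simp only [hB, Prod.snd_sub, map_add]
      rw [H2, H1, H3]
      abel
    exact Prod.ext hfst hsnd
  have hsub : ∀ x y z, B' (x - y) z = B' x z - B' y z := by
    intro x y z
    refine Prod.ext ?_ ?_ <;>
      simp [hB, map_sub, LinearMap.sub_apply] <;> abel
  rw [IsRep, IsLTS, hsd]
  constructor
  · refine ⟨fun y z => ⟨?_, ?_⟩, fun x z => ⟨?_, ?_⟩, fun x y => ⟨?_, ?_⟩⟩ <;>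
      intros <;>
      refine Prod.ext ?_ ?_ <;>
      simp [hB, map_add, map_smul, LinearMap.add_apply, LinearMap.smul_apply,
        smul_add] <;>
      abel
  · constructor
    · intro a₁ b₁ c₁ d₁ e₁
      beta_reduce
      rw [hJ (B' a₁ b₁) (B' c₁ d₁) e₁, hJ (B' a₁ b₁) c₁ d₁,
        hJ (B' (B' a₁ b₁) e₁) c₁ d₁, hsub]
      abel
    · intro a₁ b₁ c₁ d₁ e₁
      beta_reduce
      rw [hJ a₁ (B' b₁ c₁) d₁, hJ a₁ b₁ c₁, hJ (B' a₁ d₁) b₁ c₁]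
      simp only [hsub]
      abel
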